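/- Jacobi triple product specialization: For any real θ, ∏_{j=1}^∞ (1 + 2^{θ−j})(1 + 2^{1−θ−j})(1 − 2^{−j}) = ∑_{n=−∞}^∞ 2^{−n(n−1)/2}·2^{−θn}. -/

import Mathlib

open Finset Filter

/-! Auxiliary development: Jacobi triple product for `q = 1/2`. -/



noncomputable def jtpR (k : ℕ) : ℝ := ∏ j ∈ range k, (1 - (2:ℝ)⁻¹ ^ (j+1))

lemma jtpR_succ (k : ℕ) : jtpR (k+1) = jtpR k * (1 - (2:ℝ)⁻¹ ^ (k+1)) := by
  simp [jtpR, prod_range_succ]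

lemma jtpR_ge (k : ℕ) : 1/4 + (2:ℝ)⁻¹ ^ (k+1) ≤ jtpR k := by
  induction k with
  | zero => simp [jtpR]; norm_num
  | succ k ih =>
    rw [jtpR_succ]
    rcases Nat.eq_zero_or_pos k with hk | hk
    · subst hk; simp [jtpR]; norm_num
    · have h1 : (2:ℝ)⁻¹ ^ (k+1) ≤ (2:ℝ)⁻¹^2 := by
        apply pow_le_pow_of_le_one (by norm_num) (by norm_num) (by omega)
      have h2 : (0:ℝ) < (2:ℝ)⁻¹ ^ (k+1) := by positivity
      have h3 : (2:ℝ)⁻¹ ^ (k+2) = (2:ℝ)⁻¹ ^ (k+1) * 2⁻¹ := by ring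
      nlinarith [h2, ih]

lemma jtpR_pos (k : ℕ) : 0 < jtpR k := by
  have := jtpR_ge k
  have : (0:ℝ) < 1/4 + (2:ℝ)⁻¹^(k+1) := by positivity
  linarith [jtpR_ge k]

lemma jtpR_le_one (k : ℕ) : jtpR k ≤ 1 := by
  induction k with
  | zero => simp [jtpR]
  | succ k ih =>
    rw [jtpR_succ]
    have h2 : (0:ℝ) < (2:ℝ)⁻¹ ^ (k+1) := by positivity
    have h3 : (2:ℝ)⁻¹ ^ (k+1) ≤ 1 := by
      apply pow_le_one₀ <;> norm_num
    nlinarith [jtpR_pos k]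

lemma jtpR_anti : Antitone jtpR := by
  apply antitone_nat_of_succ_le
  intro k
  rw [jtpR_succ]
  have h2 : (0:ℝ) < (2:ℝ)⁻¹ ^ (k+1) := by positivity
  nlinarith [jtpR_pos k]

noncomputable def jtpL : ℝ := ⨅ k, jtpR k

lemma jtpR_bdd : BddBelow (Set.range jtpR) := by
  refine ⟨0, ?_⟩; rintro x ⟨k, rfl⟩; exact (jtpR_pos k).le

lemma jtpL_pos : 0 < jtpL := by
  have : (1/4 : ℝ) ≤ jtpL := by
    apply le_ciInf
    intro k
    have := jtpR_ge k
    have h2 : (0:ℝ) < (2:ℝ)⁻¹ ^ (k+1) := by positivity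
    linarith
  linarith

lemma jtpR_tendsto : Filter.Tendsto jtpR Filter.atTop (nhds jtpL) :=
  tendsto_atTop_ciInf jtpR_anti jtpR_bdd


lemma jtpR_quarter (k : ℕ) : 1/4 ≤ jtpR k := by
  have h := jtpR_ge k
  have h2 : (0:ℝ) < (2:ℝ)⁻¹ ^ (k+1) := by positivity
  linarith

lemma jtpR_zero : jtpR 0 = 1 := by simp [jtpR]

lemma jtp_one_sub_ne (a : ℕ) : (1:ℝ) - (2:ℝ)⁻¹^(a+1) ≠ 0 := by
  have : (2:ℝ)⁻¹^(a+1) < 1 := pow_lt_one₀ (by norm_num) (by norm_num) (by omega)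
  linarith

noncomputable def jtpG (m k : ℕ) : ℝ := jtpR m / (jtpR k * jtpR (m - k))

lemma jtpG_zero (m : ℕ) : jtpG m 0 = 1 := by
  simp [jtpG, jtpR_zero]
  exact (jtpR_pos m).ne'

lemma jtpG_self (m : ℕ) : jtpG m m = 1 := by
  simp [jtpG, jtpR_zero]
  exact (jtpR_pos m).ne'

lemma fieldaux (A B M u v : ℝ) (hA : A ≠ 0) (hB : B ≠ 0) (hu : 1 - u ≠ 0) (hv : 1 - v ≠ 0) :
    M * (1 - u*v) / (A*(1-u) * (B*(1-v))) = M / (A*(1-u) * B) + v * (M / (A * (B*(1-v)))) := by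
  field_simp
  ring

lemma jtpG_pascal (a b : ℕ) :
    jtpG (a+b+2) (a+1) = jtpG (a+b+1) (a+1) + (2:ℝ)⁻¹^(b+1) * jtpG (a+b+1) a := by
  have e1 : a+b+2 - (a+1) = b+1 := by omega
  have e2 : a+b+1 - (a+1) = b := by omega
  have e3 : a+b+1 - a = b+1 := by omega
  rw [jtpG, jtpG, jtpG, e1, e2, e3]
  have h3 : jtpR (a+b+2) = jtpR (a+b+1) * (1 - (2:ℝ)⁻¹^(a+1) * (2:ℝ)⁻¹^(b+1)) := by
    rw [jtpR_succ, ← pow_add]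
    ring_nf
  rw [h3, jtpR_succ a, jtpR_succ b]
  exact fieldaux _ _ _ _ _ (jtpR_pos a).ne' (jtpR_pos b).ne' (jtp_one_sub_ne a) (jtp_one_sub_ne b)

/-- q-binomial theorem for q = 1/2. -/
lemma jtp_qbinom (z : ℝ) (m : ℕ) :
    ∏ i ∈ range m, (1 + z * (2:ℝ)⁻¹^i) =
      ∑ k ∈ range (m+1), jtpG m k * (2:ℝ)⁻¹^(k.choose 2) * z^k := by
  induction m with
  | zero => simp [jtpG_zero]
  | succ m ih =>
    rw [prod_range_succ, ih]
    have expand : (∑ k ∈ range (m+1), jtpG m k * (2:ℝ)⁻¹^(k.choose 2) * z^k) * (1 + z * (2:ℝ)⁻¹^m)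
        = (∑ k ∈ range (m+1), jtpG m k * (2:ℝ)⁻¹^(k.choose 2) * z^k)
          + (∑ k ∈ range (m+1), jtpG m k * (2:ℝ)⁻¹^(k.choose 2 + m) * z^(k+1)) := by
      rw [mul_add, mul_one, Finset.sum_mul]
      congr 1
      apply Finset.sum_congr rfl
      intro k _
      rw [pow_add]
      ring
    rw [expand]
    -- RHS : sum over range (m+2)
    rw [Finset.sum_range_succ' (fun k => jtpG (m+1) k * (2:ℝ)⁻¹^(k.choose 2) * z^k) (m+1)]
    rw [Finset.sum_range_succ' (fun k => jtpG m k * (2:ℝ)⁻¹^(k.choose 2) * z^k) m]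
    -- now: (Σ_{k<m} A(k+1) + A0) + Σ_{k<m+1} B k = Σ_{k<m+1} C(k+1) + C0
    have hA0 : jtpG m 0 * (2:ℝ)⁻¹^((0:ℕ).choose 2) * z^0 = jtpG (m+1) 0 * (2:ℝ)⁻¹^((0:ℕ).choose 2) * z^0 := by
      rw [jtpG_zero, jtpG_zero]
    rw [Finset.sum_range_succ (fun k => jtpG m k * (2:ℝ)⁻¹^(k.choose 2 + m) * z^(k+1)) m]
    rw [Finset.sum_range_succ (fun k => jtpG (m+1) (k+1) * (2:ℝ)⁻¹^((k+1).choose 2) * z^(k+1)) m]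
    have top : jtpG m m * (2:ℝ)⁻¹^(m.choose 2 + m) * z^(m+1)
        = jtpG (m+1) (m+1) * (2:ℝ)⁻¹^((m+1).choose 2) * z^(m+1) := by
      rw [jtpG_self, jtpG_self]
      congr 2
      rw [Nat.choose_succ_succ]
      simp [Nat.choose_one_right]
      omega
    have main : ∀ k ∈ range m,
        jtpG m (k+1) * (2:ℝ)⁻¹^((k+1).choose 2) * z^(k+1)
          + jtpG m k * (2:ℝ)⁻¹^(k.choose 2 + m) * z^(k+1)
        = jtpG (m+1) (k+1) * (2:ℝ)⁻¹^((k+1).choose 2) * z^(k+1) := by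
      intro k hk
      have hk' : k < m := mem_range.mp hk
      have hp : jtpG (m+1) (k+1) = jtpG m (k+1) + (2:ℝ)⁻¹^(m-k) * jtpG m k := by
        have := jtpG_pascal k (m-1-k)
        have e1 : k + (m-1-k) + 2 = m + 1 := by omega
        have e2 : k + (m-1-k) + 1 = m := by omega
        have e3 : m - 1 - k + 1 = m - k := by omega
        rw [e1, e2, e3] at this
        exact this
      rw [hp]
      have hexp : (k+1).choose 2 + (m - k) = k.choose 2 + m := by
        have : (k+1).choose 2 = k.choose 2 + k := by
          rw [Nat.choose_succ_succ]
          simp [Nat.choose_one_right]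
          omega
        omega
      rw [add_mul, add_mul]
      congr 1
      rw [← hexp, pow_add]
      ring
    have := Finset.sum_congr rfl main
    rw [Finset.sum_add_distrib] at this
    linarith [this, hA0, top]

lemma jtp_M1 (x : ℝ) (N : ℕ) :
    ∏ i ∈ range (2*N), ((2:ℝ)⁻¹^N + x * (2:ℝ)⁻¹^i)
      = ∑ k ∈ range (2*N+1), jtpG (2*N) k * (2:ℝ)⁻¹^(k.choose 2 + N*(2*N-k)) * x^k := by
  have hqN : ((2:ℝ)⁻¹^N) ≠ 0 := by positivity
  have hfac : ∀ i ∈ range (2*N), ((2:ℝ)⁻¹^N + x * (2:ℝ)⁻¹^i)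
      = (2:ℝ)⁻¹^N * (1 + (x / (2:ℝ)⁻¹^N) * (2:ℝ)⁻¹^i) := by
    intro i _
    field_simp
  rw [prod_congr rfl hfac, prod_mul_distrib, prod_const, card_range, jtp_qbinom, mul_sum]
  apply sum_congr rfl
  intro k hk
  have hk' : k ≤ 2*N := by have := mem_range.mp hk; omega
  rw [div_pow]
  have hsplit : ((2:ℝ)⁻¹^N)^(2*N) = (2:ℝ)⁻¹^(N*(2*N-k)) * ((2:ℝ)⁻¹^N)^k := by
    rw [← pow_mul, ← pow_mul, ← pow_add]
    congr 1
    have : N * (2*N) = N*(2*N-k) + N*k := by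
      have : 2*N - k + k = 2*N := by omega
      calc N * (2*N) = N * (2*N - k + k) := by rw [this]
      _ = N*(2*N-k) + N*k := by ring
    omega
  rw [hsplit, pow_add]
  have h2 : ((2:ℝ)⁻¹^N)^k ≠ 0 := by positivity
  field_simp

lemma jtp_split (x : ℝ) (N : ℕ) :
    ∏ i ∈ range (2*N), ((2:ℝ)⁻¹^N + x * (2:ℝ)⁻¹^i)
      = ((2:ℝ)⁻¹^(N.choose 2) * ∏ j ∈ range N, (x + (2:ℝ)⁻¹^(j+1)))
        * ((2:ℝ)⁻¹^(N*N) * ∏ j ∈ range N, (1 + x * (2:ℝ)⁻¹^j)) := by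
  rw [two_mul, prod_range_add]
  congr 1
  · -- ∏_{i<N} (q^N + x q^i) = q^(C N 2) * ∏_{j<N}(x + q^(j+1))
    have hfac : ∀ i ∈ range N, ((2:ℝ)⁻¹^N + x * (2:ℝ)⁻¹^i)
        = (2:ℝ)⁻¹^i * (x + (2:ℝ)⁻¹^(N-i)) := by
      intro i hi
      have hi' : i < N := mem_range.mp hi
      have : (2:ℝ)⁻¹^N = (2:ℝ)⁻¹^i * (2:ℝ)⁻¹^(N-i) := by
        rw [← pow_add]; congr 1; omega
      rw [this]; ring
    rw [prod_congr rfl hfac, prod_mul_distrib]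
    congr 1
    · rw [prod_pow_eq_pow_sum]
      congr 1
      rw [Nat.choose_two_right, ← Finset.sum_range_id]
    · rw [← prod_range_reflect]
      apply prod_congr rfl
      intro j hj
      have hj' : j < N := mem_range.mp hj
      congr 2
      omega
  · -- ∏_{i<N} (q^N + x q^{N+i}) = q^(N*N) * ∏ (1 + x q^j)
    have hfac : ∀ i ∈ range N, ((2:ℝ)⁻¹^N + x * (2:ℝ)⁻¹^(N+i))
        = (2:ℝ)⁻¹^N * (1 + x * (2:ℝ)⁻¹^i) := by
      intro i _
      rw [pow_add]; ring
    rw [prod_congr rfl hfac, prod_mul_distrib, prod_const, card_range, ← pow_mul]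

lemma two_mul_choose_two_int (k : ℕ) : 2 * ((k.choose 2 : ℕ) : ℤ) = (k:ℤ) * ((k:ℤ)-1) := by
  induction k with
  | zero => simp
  | succ j ih =>
    have h : (j+1).choose 2 = j.choose 1 + j.choose 2 := Nat.choose_succ_succ j 1
    rw [h]
    push_cast
    push_cast at ih
    simp only [Nat.choose_one_right] at *
    push_cast
    linear_combination ih

lemma jtp_finite (x : ℝ) (hx : 0 < x) (N : ℕ) :
    ∏ j ∈ range N, ((1 + x⁻¹ * (2:ℝ)⁻¹^(j+1)) * (1 + x * (2:ℝ)⁻¹^j) * (1 - (2:ℝ)⁻¹^(j+1)))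
      = ∑ n ∈ Finset.Icc (-(N:ℤ)) (N:ℤ),
          (jtpR (2*N) * jtpR N / (jtpR ((N+n).toNat) * jtpR (((N:ℤ)-n).toNat)))
            * ((2:ℝ)⁻¹ ^ (n*(n-1)/2) * x ^ n) := by
  have hx' : x ≠ 0 := hx.ne'
  have hQ : ((2:ℝ)⁻¹^(N.choose 2 + N*N)) ≠ 0 := by positivity
  -- step 1
  have hA : ∀ j ∈ range N, (1 + x⁻¹ * (2:ℝ)⁻¹^(j+1)) = x⁻¹ * (x + (2:ℝ)⁻¹^(j+1)) := by
    intro j _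
    field_simp
  have h1 : ∏ j ∈ range N, ((1 + x⁻¹ * (2:ℝ)⁻¹^(j+1)) * (1 + x * (2:ℝ)⁻¹^j) * (1 - (2:ℝ)⁻¹^(j+1)))
      = ((x⁻¹)^N * ∏ j ∈ range N, (x + (2:ℝ)⁻¹^(j+1))) * (∏ j ∈ range N, (1 + x * (2:ℝ)⁻¹^j))
          * jtpR N := by
    rw [prod_mul_distrib, prod_mul_distrib, prod_congr rfl hA, prod_mul_distrib, prod_const,
      card_range, jtpR]
  -- step 2
  have h2 : (2:ℝ)⁻¹^(N.choose 2 + N*N)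
        * ((∏ j ∈ range N, (x + (2:ℝ)⁻¹^(j+1))) * (∏ j ∈ range N, (1 + x * (2:ℝ)⁻¹^j)))
      = ∑ k ∈ range (2*N+1), jtpG (2*N) k * (2:ℝ)⁻¹^(k.choose 2 + N*(2*N-k)) * x^k := by
    have h := (jtp_split x N).symm.trans (jtp_M1 x N)
    rw [pow_add]
    linear_combination h
  have h3 : (∏ j ∈ range N, (x + (2:ℝ)⁻¹^(j+1))) * (∏ j ∈ range N, (1 + x * (2:ℝ)⁻¹^j))
      = ((2:ℝ)⁻¹^(N.choose 2 + N*N))⁻¹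
        * ∑ k ∈ range (2*N+1), jtpG (2*N) k * (2:ℝ)⁻¹^(k.choose 2 + N*(2*N-k)) * x^k := by
    rw [← h2, inv_mul_cancel_left₀ hQ]
  rw [h1, mul_assoc ((x⁻¹)^N), h3]
  rw [Finset.mul_sum, Finset.mul_sum, Finset.sum_mul]
  -- reindex
  refine Finset.sum_nbij' (i := fun k => (k:ℤ) - (N:ℤ)) (j := fun n => (n + (N:ℤ)).toNat) ?_ ?_ ?_ ?_ ?_
  · intro k hk
    have := mem_range.mp hk
    simp only [Finset.mem_Icc]
    omega
  · intro n hn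
    have := Finset.mem_Icc.mp hn
    simp only [mem_range]
    omega
  · intro k hk
    have := mem_range.mp hk
    show (((k:ℤ) - (N:ℤ)) + (N:ℤ)).toNat = k
    omega
  · intro n hn
    have := Finset.mem_Icc.mp hn
    show (((n + (N:ℤ)).toNat : ℤ) - (N:ℤ)) = n
    omega
  · intro k hk
    have hk' : k ≤ 2*N := by have := mem_range.mp hk; omega
    have ht1 : ((N:ℤ) + ((k:ℤ)-(N:ℤ))).toNat = k := by omega
    have ht2 : ((N:ℤ) - ((k:ℤ)-(N:ℤ))).toNat = 2*N - k := by omega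
    rw [ht1, ht2]
    -- zpow identities
    have hxz : x ^ ((k:ℤ) - (N:ℤ)) = x^k * (x⁻¹)^N := by
      rw [zpow_sub₀ hx', zpow_natCast, zpow_natCast, div_eq_mul_inv, inv_pow]
    have hE : ((k.choose 2 + N*(2*N-k) : ℕ) : ℤ) - ((N.choose 2 + N*N : ℕ) : ℤ)
        = ((k:ℤ)-N)*(((k:ℤ)-N)-1)/2 := by
      have hdvd : (2:ℤ) ∣ ((k:ℤ)-N)*(((k:ℤ)-N)-1) := by
        rcases Int.even_or_odd ((k:ℤ)-N) with h | h
        · exact Dvd.dvd.mul_right h.two_dvd _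
        · have : Even (((k:ℤ)-N)-1) := by
            rcases h with ⟨m, hm⟩
            exact ⟨m, by omega⟩
          exact Dvd.dvd.mul_left this.two_dvd _
      have key2 : 2 * (((k:ℤ)-N)*(((k:ℤ)-N)-1)/2) = ((k:ℤ)-N)*(((k:ℤ)-N)-1) :=
        Int.mul_ediv_cancel' hdvd
      have hck := two_mul_choose_two_int k
      have hcN := two_mul_choose_two_int N
      have hcast : ((2*N - k : ℕ) : ℤ) = 2*(N:ℤ) - k := by omega
      have hr : (k:ℤ)*((k:ℤ)-1) + 2*(N:ℤ)*(2*(N:ℤ)-(k:ℤ)) - (N:ℤ)*((N:ℤ)-1) - 2*((N:ℤ)*(N:ℤ))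
          = ((k:ℤ)-N)*(((k:ℤ)-N)-1) := by ring
      push_cast [hcast]
      linarith
    have hqz : (2:ℝ)⁻¹ ^ (((k:ℤ)-N)*(((k:ℤ)-N)-1)/2)
        = (2:ℝ)⁻¹^(k.choose 2 + N*(2*N-k)) * ((2:ℝ)⁻¹^(N.choose 2 + N*N))⁻¹ := by
      rw [← hE, zpow_sub₀ (by norm_num : ((2:ℝ)⁻¹) ≠ 0), zpow_natCast, zpow_natCast,
        div_eq_mul_inv]
    rw [hxz, hqz]
    simp only [jtpG]
    ring

noncomputable def jtpg (x : ℝ) (n : ℤ) : ℝ := (2:ℝ)⁻¹ ^ (n*(n-1)/2) * x ^ n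

lemma jtpg_nonneg {x : ℝ} (hx : 0 < x) (n : ℤ) : 0 ≤ jtpg x n := by
  unfold jtpg; positivity

lemma jtpg_summable {x : ℝ} (hx : 0 < x) : Summable (jtpg x) := by
  have hx' : x ≠ 0 := hx.ne'
  apply Summable.of_nat_of_neg
  · -- n = k ≥ 0
    apply summable_of_ratio_norm_eventually_le (r := 1/2) (by norm_num)
    have hten : Tendsto (fun k : ℕ => (2:ℝ)⁻¹^k * x) atTop (nhds 0) := by
      simpa using (tendsto_pow_atTop_nhds_zero_of_lt_one (by norm_num) (by norm_num)
        (r := (2:ℝ)⁻¹)).mul_const x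
    have hev : ∀ᶠ k : ℕ in atTop, (2:ℝ)⁻¹^k * x ≤ 1/2 := by
      have := hten.eventually_le_const (show (0:ℝ) < 1/2 by norm_num)
      exact this
    filter_upwards [hev] with k hk
    have hrec : jtpg x ((k:ℤ)+1) = ((2:ℝ)⁻¹^k * x) * jtpg x k := by
      unfold jtpg
      have he : ((k:ℤ)+1)*(((k:ℤ)+1)-1)/2 = (k:ℤ)*((k:ℤ)-1)/2 + k := by
        have h1 : (2:ℤ) ∣ (k:ℤ)*((k:ℤ)-1) := Int.even_mul_pred_self _ |>.two_dvd
        have hmul : ((k:ℤ)+1)*(((k:ℤ)+1)-1) = (k:ℤ)*((k:ℤ)-1) + 2*k := by ring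
        omega
      rw [he, zpow_add₀ (by norm_num : ((2:ℝ)⁻¹) ≠ 0), zpow_add₀ hx', zpow_natCast,
        zpow_natCast, zpow_one]
      ring
    have h1 : (jtpg x ((k:ℤ)+1)) ≤ 1/2 * jtpg x k := by
      rw [hrec]
      have := jtpg_nonneg hx (k:ℤ)
      nlinarith [jtpg_nonneg hx (k:ℤ), hk, mul_le_mul_of_nonneg_right hk this]
    have hcast : ((k+1 : ℕ) : ℤ) = (k:ℤ)+1 := by push_cast; ring
    rw [Real.norm_eq_abs, Real.norm_eq_abs, abs_of_nonneg (jtpg_nonneg hx _),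
      abs_of_nonneg (jtpg_nonneg hx _), hcast]
    exact h1
  · -- n = -k
    apply summable_of_ratio_norm_eventually_le (r := 1/2) (by norm_num)
    have hten : Tendsto (fun k : ℕ => (2:ℝ)⁻¹^(k+1) * x⁻¹) atTop (nhds 0) := by
      have h0 : Tendsto (fun k : ℕ => (2:ℝ)⁻¹^(k+1)) atTop (nhds 0) := by
        have := (tendsto_pow_atTop_nhds_zero_of_lt_one (by norm_num) (by norm_num)
          (r := (2:ℝ)⁻¹))
        exact this.comp (tendsto_add_atTop_nat 1)
      simpa using h0.mul_const x⁻¹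
    have hev : ∀ᶠ k : ℕ in atTop, (2:ℝ)⁻¹^(k+1) * x⁻¹ ≤ 1/2 :=
      hten.eventually_le_const (show (0:ℝ) < 1/2 by norm_num)
    filter_upwards [hev] with k hk
    have hrec : jtpg x (-((k:ℤ)+1)) = ((2:ℝ)⁻¹^(k+1) * x⁻¹) * jtpg x (-k) := by
      unfold jtpg
      have he : (-((k:ℤ)+1))*((-((k:ℤ)+1))-1)/2 = (-(k:ℤ))*((-(k:ℤ))-1)/2 + (k+1) := by
        have h1 : (2:ℤ) ∣ (-(k:ℤ))*((-(k:ℤ))-1) := Int.even_mul_pred_self _ |>.two_dvd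
        have h2 : (2:ℤ) ∣ (-((k:ℤ)+1))*((-((k:ℤ)+1))-1) := Int.even_mul_pred_self _ |>.two_dvd
        have hmul : (-((k:ℤ)+1))*((-((k:ℤ)+1))-1) = (-(k:ℤ))*((-(k:ℤ))-1) + 2*(k+1) := by ring
        omega
      rw [he, zpow_add₀ (by norm_num : ((2:ℝ)⁻¹) ≠ 0)]
      rw [show (-((k:ℤ)+1)) = (-(k:ℤ)) + (-1) by ring, zpow_add₀ hx']
      rw [show ((k:ℤ)+1) = ((k+1 : ℕ) : ℤ) by push_cast; ring, zpow_natCast, zpow_neg]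
      norm_num
      ring
    have hpos := jtpg_nonneg hx (-(k:ℤ))
    have h1 : jtpg x (-((k:ℤ)+1)) ≤ 1/2 * jtpg x (-(k:ℤ)) := by
      rw [hrec]
      nlinarith [mul_le_mul_of_nonneg_right hk hpos]
    have hcast : (-((k+1:ℕ)) : ℤ) = -((k:ℤ)+1) := by push_cast; ring
    rw [Real.norm_eq_abs, Real.norm_eq_abs, abs_of_nonneg (jtpg_nonneg hx _),
      abs_of_nonneg (jtpg_nonneg hx _), hcast]
    exact h1

noncomputable def jtpf (x : ℝ) (j : ℕ) : ℝ :=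
  (1 + x⁻¹ * (2:ℝ)⁻¹^(j+1)) * (1 + x * (2:ℝ)⁻¹^j) * (1 - (2:ℝ)⁻¹^(j+1))

lemma jtp_q_lt (j : ℕ) : (2:ℝ)⁻¹^(j+1) ≤ 1/2 := by
  calc (2:ℝ)⁻¹^(j+1) ≤ (2:ℝ)⁻¹^1 :=
        pow_le_pow_of_le_one (by norm_num) (by norm_num) (by omega)
  _ = 1/2 := by norm_num

lemma jtpf_pos {x : ℝ} (hx : 0 < x) (j : ℕ) : 0 < jtpf x j := by
  unfold jtpf
  have h1 : (0:ℝ) < 1 + x⁻¹ * (2:ℝ)⁻¹^(j+1) := by positivity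
  have h2 : (0:ℝ) < 1 + x * (2:ℝ)⁻¹^j := by positivity
  have h3 : (0:ℝ) < 1 - (2:ℝ)⁻¹^(j+1) := by
    have := jtp_q_lt j
    linarith
  positivity

lemma jtpf_log_summable {x : ℝ} (hx : 0 < x) :
    Summable (fun j => Real.log (jtpf x j)) := by
  apply Summable.of_norm_bounded (g := fun j => (x⁻¹ + x + 1) * (2:ℝ)⁻¹^j)
  · exact (summable_geometric_of_lt_one (by norm_num) (by norm_num)).mul_left _
  · intro j
    set a := x⁻¹ * (2:ℝ)⁻¹^(j+1) with ha
    set b := x * (2:ℝ)⁻¹^j with hb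
    set c := (2:ℝ)⁻¹^(j+1) with hc
    have hqj : (0:ℝ) < (2:ℝ)⁻¹^j := by positivity
    have hq1 : (2:ℝ)⁻¹^(j+1) = (2:ℝ)⁻¹^j * 2⁻¹ := by rw [pow_succ]
    have hapos : 0 ≤ a := by positivity
    have hbpos : 0 ≤ b := by positivity
    have hcpos : 0 < c := by positivity
    have hchalf : c ≤ 1/2 := jtp_q_lt j
    have h1 : (0:ℝ) < 1 + a := by linarith
    have h2 : (0:ℝ) < 1 + b := by linarith
    have h3 : (0:ℝ) < 1 - c := by linarith
    have hlog : Real.log (jtpf x j)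
        = Real.log (1+a) + Real.log (1+b) + Real.log (1-c) := by
      unfold jtpf
      rw [Real.log_mul (by positivity) (by positivity), Real.log_mul h1.ne' h2.ne']
    have e1 : Real.log (1+a) ≤ a := by
      have := Real.log_le_sub_one_of_pos h1
      linarith
    have e1' : 0 ≤ Real.log (1+a) := Real.log_nonneg (by linarith)
    have e2 : Real.log (1+b) ≤ b := by
      have := Real.log_le_sub_one_of_pos h2
      linarith
    have e2' : 0 ≤ Real.log (1+b) := Real.log_nonneg (by linarith)
    have e3' : Real.log (1-c) ≤ 0 := Real.log_nonpos (by linarith) (by linarith)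
    have e3 : -Real.log (1-c) ≤ 2*c := by
      have hlb := Real.one_sub_inv_le_log_of_pos h3
      have hinv : (1-c)⁻¹ ≤ 1 + 2*c := by
        have hmm : (1:ℝ) ≤ (1+2*c)*(1-c) := by nlinarith
        have h := mul_le_mul_of_nonneg_left hmm (le_of_lt (inv_pos.mpr h3))
        calc (1-c)⁻¹ = (1-c)⁻¹ * 1 := by ring
        _ ≤ (1-c)⁻¹ * ((1+2*c)*(1-c)) := h
        _ = (1+2*c) * ((1-c)⁻¹ * (1-c)) := by ring
        _ = 1+2*c := by rw [inv_mul_cancel₀ h3.ne']; ring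
      linarith
    rw [hlog, Real.norm_eq_abs]
    have habs : |Real.log (1+a) + Real.log (1+b) + Real.log (1-c)|
        ≤ a + b + 2*c := by
      rw [abs_le]
      constructor <;> nlinarith
    have hfin : a + b + 2*c ≤ (x⁻¹ + x + 1) * (2:ℝ)⁻¹^j := by
      rw [ha, hb, hc, hq1]
      have hxi : 0 < x⁻¹ := by positivity
      nlinarith
    linarith

lemma jtpf_multipliable {x : ℝ} (hx : 0 < x) : Multipliable (jtpf x) := by
  have := Real.multipliable_of_summable_log (fun j => jtpf_pos hx j) (jtpf_log_summable hx)
  exact this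

lemma jtp_prod_eq_sum {x : ℝ} (hx : 0 < x) :
    ∏' j, jtpf x j = ∑' n, jtpg x n := by
  classical
  set coef : ℕ → ℤ → ℝ := fun N n =>
    jtpR (2*N) * jtpR N / (jtpR ((N+n).toNat) * jtpR (((N:ℤ)-n).toNat)) with hcoef
  set F : ℕ → ℤ → ℝ := fun N n =>
    if n ∈ Finset.Icc (-(N:ℤ)) (N:ℤ) then coef N n * jtpg x n else 0 with hF
  have h2 : ∀ N, ∏ j ∈ range N, jtpf x j = ∑' n, F N n := by
    intro N
    rw [tsum_eq_sum (s := Finset.Icc (-(N:ℤ)) (N:ℤ))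
      (by intro n hn; simp only [hF, if_neg hn])]
    simp only [jtpf]
    rw [jtp_finite x hx N]
    apply sum_congr rfl
    intro n hn
    simp only [hF, if_pos hn, hcoef, jtpg]
  -- dominated convergence
  have hbound_sum : Summable (fun n => 16 * jtpg x n) := (jtpg_summable hx).mul_left 16
  have hab : ∀ n : ℤ, Tendsto (fun N => F N n) atTop (nhds (jtpg x n)) := by
    intro n
    have hL2 : jtpL * jtpL ≠ 0 := (mul_pos jtpL_pos jtpL_pos).ne'
    have t2N : Tendsto (fun N : ℕ => jtpR (2*N)) atTop (nhds jtpL) := by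
      apply jtpR_tendsto.comp
      apply tendsto_atTop_atTop.mpr
      intro b
      exact ⟨b, fun a ha => by omega⟩
    have tN : Tendsto (fun N : ℕ => jtpR N) atTop (nhds jtpL) := jtpR_tendsto
    have tplus : Tendsto (fun N : ℕ => jtpR (((N:ℤ)+n).toNat)) atTop (nhds jtpL) := by
      apply jtpR_tendsto.comp
      apply tendsto_atTop_atTop.mpr
      intro b
      exact ⟨b + n.natAbs, fun a ha => by omega⟩
    have tminus : Tendsto (fun N : ℕ => jtpR (((N:ℤ)-n).toNat)) atTop (nhds jtpL) := by
      apply jtpR_tendsto.comp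
      apply tendsto_atTop_atTop.mpr
      intro b
      exact ⟨b + n.natAbs, fun a ha => by omega⟩
    have tcoef : Tendsto (fun N => coef N n) atTop (nhds 1) := by
      have := ((t2N.mul tN).div (tplus.mul tminus) hL2)
      rw [div_self hL2] at this
      exact this
    have tmain : Tendsto (fun N => coef N n * jtpg x n) atTop (nhds (jtpg x n)) := by
      simpa using tcoef.mul_const (jtpg x n)
    apply tmain.congr'
    filter_upwards [eventually_ge_atTop n.natAbs] with N hN
    have : n ∈ Finset.Icc (-(N:ℤ)) (N:ℤ) := by
      rw [Finset.mem_Icc]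
      omega
    simp only [hF, if_pos this]
  have h_bound : ∀ᶠ N : ℕ in atTop, ∀ n : ℤ, ‖F N n‖ ≤ 16 * jtpg x n := by
    apply Filter.Eventually.of_forall
    intro N n
    by_cases hmem : n ∈ Finset.Icc (-(N:ℤ)) (N:ℤ)
    · simp only [hF, if_pos hmem]
      have hg := jtpg_nonneg hx n
      have hc0 : 0 ≤ coef N n :=
        div_nonneg (mul_nonneg (jtpR_pos _).le (jtpR_pos _).le)
          (mul_nonneg (jtpR_pos _).le (jtpR_pos _).le)
      have hc16 : coef N n ≤ 16 := by
        rw [hcoef]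
        rw [div_le_iff₀ (mul_pos (jtpR_pos _) (jtpR_pos _))]
        have hub : jtpR (2*N) * jtpR N ≤ 1 :=
          mul_le_one₀ (jtpR_le_one _) (jtpR_pos _).le (jtpR_le_one _)
        have hlb : (1:ℝ)/4 * (1/4) ≤ jtpR (((N:ℤ)+n).toNat) * jtpR (((N:ℤ)-n).toNat) :=
          mul_le_mul (jtpR_quarter _) (jtpR_quarter _) (by norm_num) (jtpR_pos _).le
        nlinarith
      rw [Real.norm_eq_abs, abs_of_nonneg (mul_nonneg hc0 hg)]
      exact mul_le_mul_of_nonneg_right hc16 hg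
    · simp only [hF, if_neg hmem]
      have hg := jtpg_nonneg hx n
      have : (0:ℝ) ≤ 16 * jtpg x n := by linarith
      simpa using this
  have h3 : Tendsto (fun N => ∑' n, F N n) atTop (nhds (∑' n, jtpg x n)) :=
    tendsto_tsum_of_dominated_convergence hbound_sum hab h_bound
  have h1 : Tendsto (fun N => ∏ j ∈ range N, jtpf x j) atTop (nhds (∏' j, jtpf x j)) :=
    (jtpf_multipliable hx).hasProd.tendsto_prod_nat
  have h1' : Tendsto (fun N => ∏ j ∈ range N, jtpf x j) atTop (nhds (∑' n, jtpg x n)) := by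
    apply h3.congr
    intro N
    exact (h2 N).symm
  exact tendsto_nhds_unique h1 h1'


/-- Jacobi triple product specialization (`x = -2^{-θ}`, `q = 1/2`): for any real `θ`,
`∏_{j=1}^∞ (1 + 2^{θ-j})(1 + 2^{1-θ-j})(1 - 2^{-j}) = ∑_{n∈ℤ} 2^{-n(n-1)/2} 2^{-θn}`
(the product is indexed here from `0`, with `j + 1` in place of `j`). -/
theorem jacobi_triple_product_specialization (θ : ℝ) :
    ∏' j : ℕ, ((1 + (2 : ℝ) ^ (θ - (j + 1 : ℕ))) * (1 + (2 : ℝ) ^ (1 - θ - (j + 1 : ℕ))) *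
        (1 - (2 : ℝ) ^ (-((j : ℝ) + 1)))) =
      ∑' n : ℤ, (2 : ℝ) ^ (-((n : ℝ) * ((n : ℝ) - 1)) / 2) * (2 : ℝ) ^ (-θ * (n : ℝ)) := by
  set x : ℝ := (2:ℝ) ^ (-θ) with hxdef
  have h2 : (0:ℝ) < 2 := by norm_num
  have hx : 0 < x := Real.rpow_pos_of_pos h2 _
  have hxinv : x⁻¹ = (2:ℝ)^θ := by rw [hxdef, Real.rpow_neg h2.le, inv_inv]
  have hprod : ∀ j : ℕ,
      (1 + (2 : ℝ) ^ (θ - (j + 1 : ℕ))) * (1 + (2 : ℝ) ^ (1 - θ - (j + 1 : ℕ))) *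
        (1 - (2 : ℝ) ^ (-((j : ℝ) + 1))) = jtpf x j := by
    intro j
    simp only [jtpf, inv_pow]
    have g1 : (2 : ℝ) ^ (θ - ((j + 1 : ℕ) : ℝ)) = x⁻¹ * ((2:ℝ)^(j+1))⁻¹ := by
      have he : θ - ((j+1:ℕ):ℝ) = θ + (-(((j+1:ℕ)):ℝ)) := by ring
      rw [he, Real.rpow_add h2, Real.rpow_neg h2.le, Real.rpow_natCast, hxinv]
    have g2 : (2 : ℝ) ^ (1 - θ - ((j + 1 : ℕ) : ℝ)) = x * ((2:ℝ)^j)⁻¹ := by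
      have he : 1 - θ - ((j+1:ℕ):ℝ) = -θ + (-((j:ℕ):ℝ)) := by push_cast; ring
      rw [he, Real.rpow_add h2, Real.rpow_neg h2.le ((j:ℕ):ℝ), Real.rpow_natCast, ← hxdef]
    have g3 : (2 : ℝ) ^ (-((j:ℝ)+1)) = ((2:ℝ)^(j+1))⁻¹ := by
      have he : -((j:ℝ)+1) = -(((j+1:ℕ)):ℝ) := by push_cast; ring
      rw [he, Real.rpow_neg h2.le, Real.rpow_natCast]
    rw [g1, g2, g3]
  have hsum : ∀ n : ℤ, jtpg x n
      = (2 : ℝ) ^ (-((n : ℝ) * ((n : ℝ) - 1)) / 2) * (2 : ℝ) ^ (-θ * (n : ℝ)) := by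
    intro n
    simp only [jtpg]
    have hdvd : (2:ℤ) ∣ n*(n-1) := (Int.even_mul_pred_self n).two_dvd
    have h2m : 2*(n*(n-1)/2) = n*(n-1) := Int.mul_ediv_cancel' hdvd
    congr 1
    · -- (2⁻¹)^(n(n-1)/2) = 2^(-(n(n-1))/2 : ℝ)
      have hcast : (-(((n:ℝ))*((n:ℝ)-1)))/2 = ((-(n*(n-1)/2) : ℤ) : ℝ) := by
        have hc := congrArg (fun z : ℤ => (z : ℝ)) h2m
        push_cast at hc
        push_cast
        linarith
      rw [hcast, Real.rpow_intCast, zpow_neg, ← inv_zpow]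
    · -- x^n = 2^(-θ n)
      have he : -θ*(n:ℝ) = (-θ)*((n:ℤ):ℝ) := by push_cast; ring
      rw [he, Real.rpow_mul h2.le, Real.rpow_intCast, ← hxdef]
  rw [tprod_congr hprod, jtp_prod_eq_sum hx, tsum_congr hsum]
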